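/- arXiv:2502.15061 — 4 statements merged into one kernel-verified Lean document; each statement's English description precedes it below -/
import Mathlib

section
/- Let μ be a nonzero exterior p-form (1 ≤ p ≤ n) on an n-dimensional real vector space V, let D be its divisibility space, and set s = n − dim D. Then s ≠ p − 1, s ≤ p, and s = p holds if and only if μ is decomposable. -/
set_option synthInstance.maxHeartbeats 1000000
set_option maxHeartbeats 1000000

/-- The subspace of functionals `ξ ∈ V*` dividing `μ`, i.e. with `ξ ∧ μ = 0`. -/
noncomputable def divForms (V : Type*) [AddCommGroup V] [Module ℝ V]
    (μ : ExteriorAlgebra ℝ (Module.Dual ℝ V)) : Submodule ℝ (Module.Dual ℝ V) :=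
  LinearMap.ker ((LinearMap.mulRight ℝ μ).comp (ExteriorAlgebra.ι ℝ))

/-- The divisibility space of `μ`: all `v ∈ V` annihilated by every functional `ξ`
with `ξ ∧ μ = 0`. -/
noncomputable def divSpace (V : Type*) [AddCommGroup V] [Module ℝ V]
    (μ : ExteriorAlgebra ℝ (Module.Dual ℝ V)) : Submodule ℝ V :=
  (divForms V μ).dualCoannihilator

namespace Stmt2Aux

open ExteriorAlgebra Module

variable {M : Type*} [AddCommGroup M] [Module ℝ M]

local notation "Λ" => ExteriorAlgebra ℝ M

lemma iota_anticomm (a b : M) : ι ℝ a * ι ℝ b = - (ι ℝ b * ι ℝ a) :=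
  eq_neg_of_add_eq_zero_left (ι_add_mul_swap a b)

lemma iota_mul_list (l : List M) (a : M) :
    ι ℝ a * (l.map (ι ℝ)).prod = ((-1:ℝ)^l.length) • ((l.map (ι ℝ)).prod * ι ℝ a) := by
  induction l with
  | nil => simp
  | cons b t ih =>
    simp only [List.map_cons, List.prod_cons, List.length_cons, pow_succ]
    rw [← mul_assoc, iota_anticomm a b, neg_mul, mul_assoc, ih]
    rw [mul_smul_comm]
    simp only [mul_assoc, smul_smul]
    rw [← neg_smul]
    norm_num

lemma list_mul_iota (l : List M) (a : M) :
    (l.map (ι ℝ)).prod * ι ℝ a = ((-1:ℝ)^l.length) • (ι ℝ a * (l.map (ι ℝ)).prod) := by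
  rw [iota_mul_list, smul_smul, ← mul_pow]
  norm_num

lemma prod_ofFn_mul_iota_eq_zero {n : ℕ} (f : Fin n → M) (i : Fin n) :
    (List.ofFn fun j => ι ℝ (f j)).prod * ι ℝ (f i) = 0 := by
  have h1 : (List.ofFn fun j => ι ℝ (f j)) = (List.ofFn f).map (ι ℝ) := by
    rw [List.map_ofFn]; rfl
  have h2 := list_mul_iota (List.ofFn f) (f i)
  rw [← h1] at h2
  rw [h2, ι_mul_prod_list f i, smul_zero]

lemma prod_eq_zero_of_not_li {n : ℕ} (f : Fin n → M) (h : ¬ LinearIndependent ℝ f) :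
    (List.ofFn fun i => ι ℝ (f i)).prod = 0 := by
  induction n with
  | zero => exact absurd linearIndependent_empty_type h
  | succ n ih =>
    rw [List.ofFn_succ, List.prod_cons]
    show ι ℝ (f 0) * (List.ofFn fun i => ι ℝ (Fin.tail f i)).prod = 0
    rw [show f = Fin.cons (f 0) (Fin.tail f) from (Fin.cons_self_tail f).symm,
      linearIndependent_fin_cons, not_and_or] at h
    rcases h with h | h
    · rw [ih _ h, mul_zero]
    · rw [not_not] at h
      obtain ⟨c, hc⟩ := (Submodule.mem_span_range_iff_exists_fun ℝ).mp h
      have hι : ι ℝ (f 0) = ∑ j, c j • ι ℝ (Fin.tail f j) := by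
        rw [← hc, map_sum]
        simp [map_smul]
      rw [hι, Finset.sum_mul]
      refine Finset.sum_eq_zero fun j _ => ?_
      rw [smul_mul_assoc, ι_mul_prod_list (Fin.tail f) j, smul_zero]

lemma contract_mem (d : Module.Dual ℝ M) {n : ℕ} {x : ExteriorAlgebra ℝ M}
    (hx : x ∈ ⋀[ℝ]^n M) :
    CliffordAlgebra.contractLeft d x ∈ ⋀[ℝ]^(n-1) M := by
  induction hx using Submodule.pow_induction_on_left' with
  | algebraMap r => rw [CliffordAlgebra.contractLeft_algebraMap]; exact Submodule.zero_mem _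
  | add x y i hx hy ihx ihy => rw [map_add]; exact Submodule.add_mem _ ihx ihy
  | mem_mul m hm i x hx ihx =>
    obtain ⟨a, rfl⟩ := hm
    rw [CliffordAlgebra.contractLeft_ι_mul]
    refine Submodule.sub_mem _ (Submodule.smul_mem _ _ ?_) ?_
    · have h0 : (i + 1) - 1 = i := by omega
      rw [h0]; exact hx
    · rcases Nat.eq_zero_or_pos i with hi | hi
      · subst hi
        rw [pow_zero] at hx
        obtain ⟨r, rfl⟩ := Submodule.mem_one.mp hx
        rw [CliffordAlgebra.contractLeft_algebraMap, mul_zero]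
        exact Submodule.zero_mem _
      · obtain ⟨j, rfl⟩ : ∃ j, i = j + 1 := ⟨i - 1, by omega⟩
        simp only [Nat.add_sub_cancel] at ihx ⊢
        have h2 : CliffordAlgebra.ι (0 : QuadraticForm ℝ M) a * CliffordAlgebra.contractLeft d x
            ∈ LinearMap.range (ι ℝ (M := M)) ^ (j + 1) := by
          rw [pow_succ']
          exact Submodule.mul_mem_mul (LinearMap.mem_range_self _ a) ihx
        exact h2

lemma exists_dual_delta {n : ℕ} {f : Fin n → M} (hli : LinearIndependent ℝ f) (j : Fin n) :
    ∃ d : Module.Dual ℝ M, d (f j) = 1 ∧ ∀ i, i ≠ j → d (f i) = 0 := by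
  let b : Basis (Fin n) ℝ (Submodule.span ℝ (Set.range f)) := Basis.span hli
  obtain ⟨g, hg⟩ := LinearMap.exists_extend (b.coord j)
  have key : ∀ i, g (f i) = if i = j then 1 else 0 := by
    intro i
    have hmem : f i ∈ Submodule.span ℝ (Set.range f) :=
      Submodule.subset_span (Set.mem_range_self i)
    have hbi : (⟨f i, hmem⟩ : Submodule.span ℝ (Set.range f)) = b i :=
      (Basis.span_apply hli i).symm
    have := LinearMap.congr_fun hg ⟨f i, hmem⟩
    simp only [LinearMap.comp_apply, Submodule.subtype_apply] at this
    rw [this, hbi, Basis.coord_apply, Basis.repr_self, Finsupp.single_apply]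
  exact ⟨g, by simp [key], fun i hij => by simp [key, hij]⟩

lemma prod_smul_head {n : ℕ} (f : Fin (n+1) → M) (r : ℝ) :
    (List.ofFn fun i => ι ℝ (Function.update f 0 (r • f 0) i)).prod
      = r • (List.ofFn fun i => ι ℝ (f i)).prod := by
  rw [List.ofFn_succ, List.ofFn_succ, List.prod_cons, List.prod_cons]
  have h1 : ∀ i : Fin n, Function.update f 0 (r • f 0) i.succ = f i.succ := fun i =>
    Function.update_of_ne (Fin.succ_ne_zero i) _ f
  simp only [h1, Function.update_self, map_smul, smul_mul_assoc]

lemma exists_eq_smul_prod {n : ℕ} (hn : 1 ≤ n) (f : Fin n → M) (r : ℝ) :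
    ∃ g : Fin n → M,
      r • (List.ofFn fun i => ι ℝ (f i)).prod = (List.ofFn fun i => ι ℝ (g i)).prod := by
  obtain ⟨k, rfl⟩ : ∃ k, n = k + 1 := ⟨n - 1, by omega⟩
  exact ⟨Function.update f 0 (r • f 0), (prod_smul_head f r).symm⟩

lemma div_lemma : ∀ (k : ℕ) (f : Fin k → M), LinearIndependent ℝ f →
    ∀ (m : ℕ) (μ : ExteriorAlgebra ℝ M), μ ∈ ⋀[ℝ]^m M →
    (∀ i, ι ℝ (f i) * μ = 0) →
    ∃ ν ∈ ⋀[ℝ]^(m-k) M,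
      μ = (List.ofFn fun i => ι ℝ (f i)).prod * ν ∧ (m < k → μ = 0) := by
  intro k
  induction k with
  | zero =>
    intro f _ m μ hμ _
    exact ⟨μ, hμ, by simp, by omega⟩
  | succ k ih =>
    intro f hli m μ hμ hdiv
    obtain ⟨d, hd1, hd0⟩ := exists_dual_delta hli (Fin.last k)
    set μ' := CliffordAlgebra.contractLeft d μ with hμ'def
    have hμ' : μ' ∈ ⋀[ℝ]^(m-1) M := contract_mem d hμ
    have hfact : μ = ι ℝ (f (Fin.last k)) * μ' := by
      have := CliffordAlgebra.contractLeft_ι_mul (d := d) (f (Fin.last k)) μ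
      rw [hdiv (Fin.last k), map_zero, hd1, one_smul] at this
      exact eq_of_sub_eq_zero this.symm
    have hdiv' : ∀ i : Fin k, ι ℝ (f i.castSucc) * μ' = 0 := by
      intro i
      have := CliffordAlgebra.contractLeft_ι_mul (d := d) (f i.castSucc) μ
      rw [hdiv i.castSucc, map_zero, hd0 _ (Fin.castSucc_lt_last i).ne, zero_smul] at this
      have h1 : (0:ExteriorAlgebra ℝ M) - ι ℝ (f i.castSucc) * μ' = 0 := this.symm
      rw [zero_sub, neg_eq_zero] at h1
      exact h1
    have hlic : LinearIndependent ℝ (f ∘ Fin.castSucc) :=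
      hli.comp _ (Fin.castSucc_injective k)
    obtain ⟨ν, hν, hfact', hlt'⟩ := ih (f ∘ Fin.castSucc) hlic (m-1) μ' hμ' hdiv'
    refine ⟨((-1:ℝ)^k) • ν, ?_, ?_, ?_⟩
    · have : m - 1 - k = m - (k+1) := by omega
      rw [← this]; exact Submodule.smul_mem _ _ hν
    · rw [List.ofFn_succ', List.concat_eq_append, List.prod_append, List.prod_cons,
        List.prod_nil, mul_one]
      have hmap : (List.ofFn fun i : Fin k => ι ℝ (f i.castSucc))
          = (List.ofFn (f ∘ Fin.castSucc)).map (ι ℝ) := by rw [List.map_ofFn]; rfl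
      have hanti := iota_mul_list (List.ofFn (f ∘ Fin.castSucc)) (f (Fin.last k))
      rw [← hmap, List.length_ofFn] at hanti
      calc μ = ι ℝ (f (Fin.last k)) * μ' := hfact
        _ = ι ℝ (f (Fin.last k)) *
            ((List.ofFn fun i : Fin k => ι ℝ ((f ∘ Fin.castSucc) i)).prod * ν) := by rw [hfact']
        _ = (ι ℝ (f (Fin.last k)) *
            (List.ofFn fun i : Fin k => ι ℝ (f i.castSucc)).prod) * ν := by
              rw [mul_assoc]; rfl
        _ = ((List.ofFn fun i : Fin k => ι ℝ (f i.castSucc)).prod * ι ℝ (f (Fin.last k))) *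
            ((-1:ℝ)^k • ν) := by
              rw [hanti, smul_mul_assoc, mul_smul_comm]
    · intro hm
      rcases Nat.eq_zero_or_pos m with h0 | h0
      · subst h0
        have hμ1 : μ ∈ (1 : Submodule ℝ (ExteriorAlgebra ℝ M)) := by
          rw [← pow_zero (LinearMap.range (ι ℝ (M := M)))]; exact hμ
        obtain ⟨r, hr⟩ := Submodule.mem_one.mp hμ1
        have h1 := hdiv (Fin.last k)
        rw [← hr, ← Algebra.commutes, ← Algebra.smul_def] at h1
        have h2 : ι ℝ (f (Fin.last k)) ≠ 0 := by
          intro h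
          exact hli.ne_zero (Fin.last k) ((ι_inj (R := ℝ) _ 0).mp (by rw [h, map_zero]))
        rcases smul_eq_zero.mp h1 with h | h
        · rw [← hr, h, map_zero]
        · exact absurd h h2
      · have : μ' = 0 := hlt' (by omega)
        rw [hfact, this, mul_zero]

lemma basis_subtype_li {N : Type*} [AddCommGroup N] [Module ℝ N] (W : Submodule ℝ N)
    {n : ℕ} (b : Basis (Fin n) ℝ W) :
    LinearIndependent ℝ (fun i => ((b i : W) : N)) :=
  b.linearIndependent.map' W.subtype W.ker_subtype

end Stmt2Aux

open ExteriorAlgebra Module Stmt2Aux in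
theorem stmt2 (V : Type*) [AddCommGroup V] [Module ℝ V] [FiniteDimensional ℝ V]
    (p : ℕ) (hp1 : 1 ≤ p) (hpn : p ≤ Module.finrank ℝ V)
    (μ : ExteriorAlgebra ℝ (Module.Dual ℝ V))
    (hμdeg : μ ∈ ⋀[ℝ]^p (Module.Dual ℝ V)) (hμ0 : μ ≠ 0) :
    Module.finrank ℝ V - Module.finrank ℝ (divSpace V μ) ≠ p - 1 ∧
    Module.finrank ℝ V - Module.finrank ℝ (divSpace V μ) ≤ p ∧
    (Module.finrank ℝ V - Module.finrank ℝ (divSpace V μ) = p ↔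
      ∃ ξ : Fin p → Module.Dual ℝ V,
        μ = (List.ofFn fun i => ExteriorAlgebra.ι ℝ (ξ i)).prod) := by
  classical
  have hWmem : ∀ ξ : Module.Dual ℝ V, ξ ∈ divForms V μ ↔ ExteriorAlgebra.ι ℝ ξ * μ = 0 := by
    intro ξ
    simp [divForms, LinearMap.mem_ker, LinearMap.mulRight_apply]
  have hdualrank : Module.finrank ℝ (Module.Dual ℝ V) = Module.finrank ℝ V :=
    Subspace.dual_finrank_eq
  have hdn : Module.finrank ℝ (divForms V μ) ≤ Module.finrank ℝ V :=
    hdualrank ▸ Submodule.finrank_le (divForms V μ)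
  have hcoann := Subspace.finrank_add_finrank_dualCoannihilator_eq (divForms V μ)
  have hs : Module.finrank ℝ V - Module.finrank ℝ (divSpace V μ)
      = Module.finrank ℝ (divForms V μ) := by
    have h1 : Module.finrank ℝ (divSpace V μ)
        = Module.finrank ℝ (divForms V μ).dualCoannihilator := rfl
    omega
  set W := divForms V μ with hWdef
  haveI : Module.Free ℝ W := Module.Free.of_divisionRing ℝ W
  obtain ⟨b⟩ : Nonempty (Basis (Fin (Module.finrank ℝ W)) ℝ W) := ⟨Module.finBasis ℝ W⟩
  let f : Fin (Module.finrank ℝ W) → Module.Dual ℝ V := fun i => (b i : Module.Dual ℝ V)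
  have hli : LinearIndependent ℝ f := basis_subtype_li W b
  have hdivf : ∀ i, ExteriorAlgebra.ι ℝ (f i) * μ = 0 := fun i => (hWmem _).mp (b i).2
  obtain ⟨ν, hν, hfact, hlt⟩ := div_lemma _ f hli p μ hμdeg hdivf
  have hdp : Module.finrank ℝ W ≤ p := by
    by_contra h
    exact hμ0 (hlt (by omega))
  have hmap : (List.ofFn fun i => ExteriorAlgebra.ι ℝ (f i))
      = (List.ofFn f).map (ExteriorAlgebra.ι ℝ) := by rw [List.map_ofFn]; rfl
  have hne : Module.finrank ℝ W ≠ p - 1 := by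
    intro hd
    have h1 : p - Module.finrank ℝ W = 1 := by omega
    rw [h1] at hν
    have hν1 : ν ∈ LinearMap.range (ExteriorAlgebra.ι ℝ (M := Module.Dual ℝ V)) := by
      rw [← pow_one (LinearMap.range (ExteriorAlgebra.ι ℝ (M := Module.Dual ℝ V)))]
      exact hν
    obtain ⟨η, hη⟩ := hν1
    have hηW : η ∈ W := by
      rw [hWdef, hWmem, hfact, ← hη, ← mul_assoc, hmap, iota_mul_list, smul_mul_assoc,
        mul_assoc, ι_sq_zero, mul_zero, smul_zero]
    have hrepr' : η = ∑ i, (b.repr ⟨η, hηW⟩ i) • f i := by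
      have h2 := congrArg W.subtype (b.sum_repr ⟨η, hηW⟩)
      simp only [map_sum, map_smul, Submodule.subtype_apply] at h2
      exact h2.symm
    apply absurd _ hμ0
    rw [hfact, ← hη, hrepr', map_sum, Finset.mul_sum]
    refine Finset.sum_eq_zero fun i _ => ?_
    rw [map_smul, mul_smul_comm, prod_ofFn_mul_iota_eq_zero f i, smul_zero]
  have hfwd : Module.finrank ℝ W = p →
      ∃ ξ : Fin p → Module.Dual ℝ V,
        μ = (List.ofFn fun i => ExteriorAlgebra.ι ℝ (ξ i)).prod := by
    intro hd
    subst hd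
    rw [Nat.sub_self] at hν
    have hν1 : ν ∈ (1 : Submodule ℝ (ExteriorAlgebra ℝ (Module.Dual ℝ V))) := by
      rw [← pow_zero (LinearMap.range (ExteriorAlgebra.ι ℝ (M := Module.Dual ℝ V)))]
      exact hν
    obtain ⟨r, hr⟩ := Submodule.mem_one.mp hν1
    obtain ⟨g, hg⟩ := exists_eq_smul_prod hp1 f r
    refine ⟨g, ?_⟩
    rw [hfact, ← hr, ← Algebra.commutes, ← Algebra.smul_def]
    exact hg
  have hbwd : (∃ ξ : Fin p → Module.Dual ℝ V,
      μ = (List.ofFn fun i => ExteriorAlgebra.ι ℝ (ξ i)).prod) →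
      Module.finrank ℝ W = p := by
    rintro ⟨ξ', hξ'⟩
    have hli' : LinearIndependent ℝ ξ' := by
      by_contra h
      exact hμ0 (hξ'.trans (prod_eq_zero_of_not_li ξ' h))
    have hsub : Submodule.span ℝ (Set.range ξ') ≤ W := by
      rw [Submodule.span_le]
      rintro _ ⟨i, rfl⟩
      rw [SetLike.mem_coe, hWdef, hWmem, hξ']
      exact ι_mul_prod_list ξ' i
    have hcard : Module.finrank ℝ (Submodule.span ℝ (Set.range ξ')) = p := by
      rw [finrank_span_eq_card hli', Fintype.card_fin]
    have hp' : p ≤ Module.finrank ℝ W := by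
      rw [← hcard]
      exact Submodule.finrank_mono hsub
    omega
  refine ⟨by rw [hs]; exact hne, by rw [hs]; exact hdp, ?_⟩
  rw [hs]
  exact ⟨hfwd, hbwd⟩
end

section
/- Let μ be a nonzero exterior p-form (1 ≤ p ≤ n) on an n-dimensional real vector space V, let D be its divisibility space, let D′ = {ξ ∈ V* : ξ ∧ μ = 0} (a subspace of V*, the annihilator of D), and let s = dim D′. Then for every basis ξ¹, …, ξⁿ of V* whose first s members ξ¹, …, ξˢ form a basis of D′, there exists an exterior (p−s)-form ζ on V which is a linear combination of (p−s)-fold wedge products of functionals from the set {ξ^{s+1}, …, ξⁿ}, such that μ = ξ¹ ∧ … ∧ ξˢ ∧ ζ, and this ζ is indivisible (ξ ∧ ζ ≠ 0 for every nonzero ξ ∈ V*). -/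
set_option synthInstance.maxHeartbeats 1000000
set_option maxHeartbeats 1000000

open ExteriorAlgebra

noncomputable section
namespace Stmt3Aux


variable {W : Type*} [AddCommGroup W] [Module ℝ W] {n : ℕ} (b : Module.Basis (Fin n) ℝ W)

def coordAlt (k : ℕ) (w : Fin k → Fin n) : W [⋀^Fin k]→ₗ[ℝ] ℝ :=
  (Matrix.detRowAlternating : (Fin k → ℝ) [⋀^Fin k]→ₗ[ℝ] ℝ).compLinearMap
    (LinearMap.pi fun a => b.coord (w a))

def Phi (k : ℕ) (w : Fin k → Fin n) : ExteriorAlgebra ℝ W →ₗ[ℝ] ℝ :=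
  ExteriorAlgebra.liftAlternating
    (Function.update (fun _ => 0 : ∀ i, W [⋀^Fin i]→ₗ[ℝ] ℝ) k (coordAlt b k w))

lemma Phi_ιMulti (k : ℕ) (w : Fin k → Fin n) (v : Fin k → W) :
    Phi b k w (ιMulti ℝ k v) = coordAlt b k w v := by
  rw [Phi, liftAlternating_apply_ιMulti, Function.update_self]

lemma Phi_monomial (k : ℕ) (w u : Fin k → Fin n) :
    Phi b k w (ιMulti ℝ k (b ∘ u)) =
      Matrix.det (Matrix.of fun c a => if u c = w a then (1 : ℝ) else 0) := by
  rw [Phi_ιMulti]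
  show Matrix.det (Matrix.of fun c a => b.coord (w a) (b (u c))) = _
  congr 1
  ext c a
  simp [Module.Basis.coord_apply, Module.Basis.repr_self, Finsupp.single_apply]

lemma Phi_monomial_self (k : ℕ) (w : Fin k → Fin n) (hw : Function.Injective w) :
    Phi b k w (ιMulti ℝ k (b ∘ w)) = 1 := by
  rw [Phi_monomial]
  have : (Matrix.of fun c a => if w c = w a then (1 : ℝ) else 0) = (1 : Matrix (Fin k) (Fin k) ℝ) := by
    ext c a
    simp [Matrix.one_apply, hw.eq_iff]
  rw [this, Matrix.det_one]

lemma Phi_monomial_of_ne (k : ℕ) (w u : Fin k → Fin n) (hw : Function.Injective w)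
    (h : Function.Injective u → Set.range u = Set.range w → u = w) (hne : u ≠ w) :
    Phi b k w (ιMulti ℝ k (b ∘ u)) = 0 := by
  rw [Phi_monomial]
  by_cases hu : Function.Injective u
  · -- ranges must differ
    have hr : Set.range u ≠ Set.range w := fun he => hne (h hu he)
    have : ∃ a, w a ∉ Set.range u := by
      by_contra hc
      push_neg at hc
      have hsub : Set.range w ⊆ Set.range u := by
        rintro _ ⟨a, rfl⟩; exact hc a
      have hcard : ∀ f : Fin k → Fin n, Function.Injective f → (Set.range f).ncard = k := by
        intro f hf
        rw [← Set.image_univ, Set.ncard_image_of_injective _ hf, Set.ncard_univ,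
          Nat.card_eq_fintype_card, Fintype.card_fin]
      have : Set.range w = Set.range u :=
        Set.eq_of_subset_of_ncard_le hsub (by rw [hcard w hw, hcard u hu]) (Set.finite_range u)
      exact hr this.symm
    obtain ⟨a, ha⟩ := this
    apply Matrix.det_eq_zero_of_column_eq_zero a
    intro c
    simp only [Matrix.of_apply, ite_eq_right_iff]
    intro hc
    exact absurd ⟨c, hc⟩ ha
  · -- two equal rows
    rw [Function.not_injective_iff] at hu
    obtain ⟨c₁, c₂, hval, hne'⟩ := hu
    apply Matrix.det_zero_of_row_eq hne'
    ext a
    simp [hval]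



variable {W : Type*} [AddCommGroup W] [Module ℝ W] {n : ℕ} (b : Module.Basis (Fin n) ℝ W)

lemma mem_span_strictMono (p : ℕ) {x : ExteriorAlgebra ℝ W} (hx : x ∈ ⋀[ℝ]^p W) :
    x ∈ Submodule.span ℝ
      (Set.range fun g : {g : Fin p → Fin n // StrictMono g} => ιMulti ℝ p (b ∘ g.1)) := by
  rw [← ιMulti_span_fixedDegree] at hx
  refine Submodule.span_le.2 ?_ hx
  rintro _ ⟨v, rfl⟩
  -- expand each v i in the basis
  have hrep : ∀ r : Fin p → Fin n, Function.Injective r →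
      ιMulti ℝ p (b ∘ r) ∈ Submodule.span ℝ
        (Set.range fun g : {g : Fin p → Fin n // StrictMono g} => ιMulti ℝ p (b ∘ g.1)) := by
    intro r hr
    set σ := Tuple.sort r with hσ
    have hmono : StrictMono (r ∘ σ) :=
      (Tuple.monotone_sort r).strictMono_of_injective (hr.comp σ.injective)
    have hperm : ιMulti ℝ p (b ∘ (r ∘ σ)) = Equiv.Perm.sign σ • ιMulti ℝ p (b ∘ r) := by
      have := (ιMulti ℝ p (M := W)).map_perm (b ∘ r) σ
      rw [← this]
      rfl
    have hmem : ιMulti ℝ p (b ∘ (r ∘ σ)) ∈ Submodule.span ℝ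
        (Set.range fun g : {g : Fin p → Fin n // StrictMono g} => ιMulti ℝ p (b ∘ g.1)) :=
      Submodule.subset_span ⟨⟨r ∘ σ, hmono⟩, rfl⟩
    rcases Int.units_eq_one_or (Equiv.Perm.sign σ) with h1 | h1 <;> rw [h1] at hperm
    · rw [one_smul] at hperm
      rwa [← hperm]
    · have : ιMulti ℝ p (b ∘ r) = -ιMulti ℝ p (b ∘ (r ∘ σ)) := by
        rw [hperm]; simp
      rw [this]
      exact neg_mem hmem
  have expand : ιMulti ℝ p v =
      ∑ r : Fin p → Fin n, (∏ i, b.repr (v i) (r i)) • ιMulti ℝ p (b ∘ r) := by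
    have h1 : v = fun i => ∑ j, b.repr (v i) j • b j := by
      funext i
      rw [Module.Basis.sum_repr]
    conv_lhs => rw [h1]
    rw [show (ιMulti ℝ p (M := W)) (fun i => ∑ j, b.repr (v i) j • b j)
        = (ιMulti ℝ p (M := W)).toMultilinearMap (fun i => ∑ j, b.repr (v i) j • b j) from rfl,
      MultilinearMap.map_sum]
    refine Finset.sum_congr rfl fun r _ => ?_
    rw [MultilinearMap.map_smul_univ]
    rfl
  rw [expand]
  refine Submodule.sum_mem _ fun r _ => Submodule.smul_mem _ _ ?_
  by_cases hr : Function.Injective r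
  · exact hrep r hr
  · have : ¬Function.Injective (b ∘ r) := fun h => hr (Function.Injective.of_comp h)
    rw [(ιMulti ℝ p (M := W)).map_eq_zero_of_not_injective (⇑b ∘ r) this]
    exact Submodule.zero_mem _



lemma strictMono_le_apply {p n : ℕ} {f : Fin p → Fin n} (hf : StrictMono f) (j : Fin p) :
    (j : ℕ) ≤ (f j : ℕ) := by
  suffices h : ∀ k : ℕ, ∀ j : Fin p, (j : ℕ) = k → k ≤ (f j : ℕ) from h j j rfl
  intro k
  induction k with
  | zero => intro j _; exact Nat.zero_le _
  | succ k ih =>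
    intro j hj
    have hkp : k < p := by omega
    have hlt : (⟨k, hkp⟩ : Fin p) < j := by
      simp only [Fin.lt_def, Fin.val_mk]; omega
    have := hf hlt
    have hk := ih ⟨k, hkp⟩ rfl
    rw [Fin.lt_def] at this
    omega

lemma strictMono_fix {p n s : ℕ} {f : Fin p → Fin n} (hf : StrictMono f)
    (hall : ∀ i : Fin n, (i : ℕ) < s → i ∈ Set.range f) :
    ∀ j : Fin p, (j : ℕ) < s → ((f j) : ℕ) = (j : ℕ) := by
  suffices h : ∀ k : ℕ, ∀ j : Fin p, (j : ℕ) = k → k < s → ((f j) : ℕ) = k by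
    intro j hj; exact h j j rfl hj
  intro k
  induction k using Nat.strong_induction_on with
  | _ k ih =>
    intro j hj hks
    obtain ⟨m, hm⟩ := hall ⟨k, by
      have := strictMono_le_apply hf j
      have := (f j).isLt
      omega⟩ hks
    have hmval : ((f m) : ℕ) = k := by rw [hm]
    rcases lt_trichotomy ((m : ℕ)) k with h | h | h
    · have := ih m h m rfl (by omega)
      omega
    · have hmj : m = j := by apply Fin.ext; omega
      rw [← hmj]; exact hmval
    · have hlt : j < m := by rw [Fin.lt_def]; omega
      have := hf hlt
      rw [Fin.lt_def] at this
      have := strictMono_le_apply hf j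
      omega

variable {W : Type*} [AddCommGroup W] [Module ℝ W]

lemma ι_anticomm (x y : W) :
    ExteriorAlgebra.ι ℝ x * ExteriorAlgebra.ι ℝ y = -(ExteriorAlgebra.ι ℝ y * ExteriorAlgebra.ι ℝ x) := by
  have h := ExteriorAlgebra.ι_sq_zero (R := ℝ) (x + y)
  rw [map_add, add_mul, mul_add, mul_add, ExteriorAlgebra.ι_sq_zero, ExteriorAlgebra.ι_sq_zero] at h
  linear_combination (norm := abel) h

lemma ι_mul_prod (ξ : W) (k : ℕ) (u : Fin k → W) :
    ExteriorAlgebra.ι ℝ ξ * (List.ofFn fun i => ExteriorAlgebra.ι ℝ (u i)).prod =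
      ((-1 : ℝ) ^ k) • ((List.ofFn fun i => ExteriorAlgebra.ι ℝ (u i)).prod * ExteriorAlgebra.ι ℝ ξ) := by
  induction k with
  | zero => simp
  | succ k ih =>
    rw [List.ofFn_succ, List.prod_cons, ← mul_assoc, ι_anticomm ξ (u 0), neg_mul, mul_assoc,
      ih (fun i => u i.succ), mul_smul_comm, ← neg_smul, ← mul_assoc]
    congr 1
    ring

variable {W : Type*} [AddCommGroup W] [Module ℝ W]

lemma ι_mul_ιMulti (x : W) (k : ℕ) (v : Fin k → W) :
    ExteriorAlgebra.ι ℝ x * ιMulti ℝ k v = ιMulti ℝ (k + 1) (Matrix.vecCons x v) := by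
  rw [ιMulti_succ_apply, Matrix.cons_val_zero]
  rw [Matrix.tail_cons]



lemma comp_vecCons' {α β : Type*} (f : α → β) (x : α) {k : ℕ} (u : Fin k → α) :
    Matrix.vecCons (f x) (f ∘ u) = f ∘ Matrix.vecCons x u := by
  funext j
  refine Fin.cases ?_ ?_ j <;> simp

lemma vecCons_injective {α : Type*} {x : α} {k : ℕ} {u : Fin k → α}
    (hx : x ∉ Set.range u) (hu : Function.Injective u) :
    Function.Injective (Matrix.vecCons x u) := by
  intro a b hab
  rcases Fin.eq_zero_or_eq_succ a with rfl | ⟨a', rfl⟩ <;>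
    rcases Fin.eq_zero_or_eq_succ b with rfl | ⟨b', rfl⟩
  · rfl
  · simp only [Matrix.cons_val_zero, Matrix.cons_val_succ] at hab
    exact absurd ⟨_, hab.symm⟩ hx
  · simp only [Matrix.cons_val_zero, Matrix.cons_val_succ] at hab
    exact absurd ⟨_, hab⟩ hx
  · simp only [Matrix.cons_val_succ] at hab
    rw [hu hab]

lemma vecCons_inj_head {α : Type*} {x : α} {k : ℕ} {u : Fin k → α}
    (h : Function.Injective (Matrix.vecCons x u)) : x ∉ Set.range u := by
  rintro ⟨m, rfl⟩
  have : (0 : Fin (k+1)) = m.succ := h (by simp)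
  exact absurd this.symm (Fin.succ_ne_zero m)

lemma vecCons_inj_tail {α : Type*} {x : α} {k : ℕ} {u : Fin k → α}
    (h : Function.Injective (Matrix.vecCons x u)) : Function.Injective u := by
  intro a b hab
  have : a.succ = b.succ := h (by simpa using hab)
  exact Fin.succ_injective _ this

lemma union_singleton_cancel {α : Type*} {a : α} {s t : Set α} (hs : a ∉ s) (ht : a ∉ t)
    (h : {a} ∪ s = {a} ∪ t) : s = t := by
  ext x
  constructor <;> intro hx
  · have : x ∈ {a} ∪ t := h ▸ Set.mem_union_right _ hx
    rcases this with h' | h' 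
    · exact absurd (Set.mem_singleton_iff.1 h' ▸ hx) hs
    · exact h'
  · have : x ∈ {a} ∪ s := h.symm ▸ Set.mem_union_right _ hx
    rcases this with h' | h'
    · exact absurd (Set.mem_singleton_iff.1 h' ▸ hx) ht
    · exact h'

lemma listIf' {A : Type*} [Monoid A] {s n : ℕ} (hsn : s ≤ n) (f : Fin n → A) :
    (List.ofFn fun i : Fin n => if (i : ℕ) < s then f i else 1).prod =
      (List.ofFn fun i : Fin s => f (Fin.castLE hsn i)).prod := by
  obtain ⟨m, rfl⟩ : ∃ m, n = s + m := ⟨n - s, (Nat.add_sub_cancel' hsn).symm⟩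
  rw [List.ofFn_add, List.prod_append]
  have h1 : (List.ofFn fun i : Fin s =>
      if ((Fin.castAdd m i : Fin (s + m)) : ℕ) < s then f (Fin.castAdd m i) else 1) =
      List.ofFn fun i : Fin s => f (Fin.castLE hsn i) := by
    congr 1
    funext i
    simp only [Fin.coe_castAdd]
    rw [if_pos i.isLt]
    congr 1
  have h2 : (List.ofFn fun j : Fin m =>
      if ((Fin.natAdd s j : Fin (s + m)) : ℕ) < s then f (Fin.natAdd s j) else 1) =
      List.ofFn fun _ : Fin m => (1 : A) := by
    congr 1
    funext j
    rw [if_neg]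
    simp
  erw [h1]
  rw [h2, List.ofFn_const, List.prod_replicate, one_pow, mul_one]

lemma strictMono_eq_of_range_eq {k m : ℕ} {f g : Fin k → Fin m} (hf : StrictMono f)
    (hg : StrictMono g) (h : Set.range f = Set.range g) : f = g := by
  haveI : WellFoundedLT (Fin k) := inferInstance
  exact (StrictMono.range_inj hf hg).mp h

end Stmt3Aux
end

/-- For a nonzero exterior `p`-form `μ` (`1 ≤ p ≤ n`) on an `n`-dimensional
real vector space `V`, with `D′ = {ξ ∈ V* : ξ ∧ μ = 0}` of dimension `s`, and any basis
`ξ¹, …, ξⁿ` of `V*` whose first `s` members lie in (hence form a basis of) `D′`, there is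
an exterior `(p-s)`-form `ζ`, a linear combination of `(p-s)`-fold wedge products of the
functionals `ξ^{s+1}, …, ξⁿ`, with `μ = ξ¹ ∧ ⋯ ∧ ξˢ ∧ ζ`, and `ζ` is indivisible. -/
theorem stmt3 (V : Type*) [AddCommGroup V] [Module ℝ V] [FiniteDimensional ℝ V]
    (p : ℕ) (hp1 : 1 ≤ p) (hpn : p ≤ Module.finrank ℝ V)
    (μ : ExteriorAlgebra ℝ (Module.Dual ℝ V))
    (hμdeg : μ ∈ ⋀[ℝ]^p (Module.Dual ℝ V)) (hμ0 : μ ≠ 0)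
    (s : ℕ) (hs : s = Module.finrank ℝ (divForms V μ))
    (b : Module.Basis (Fin (Module.finrank ℝ V)) ℝ (Module.Dual ℝ V))
    (hb : ∀ i : Fin (Module.finrank ℝ V), (i : ℕ) < s → b i ∈ divForms V μ) :
    ∃ ζ : ExteriorAlgebra ℝ (Module.Dual ℝ V),
      ζ ∈ ⋀[ℝ]^(p - s) (Module.Dual ℝ V) ∧
      ζ ∈ Submodule.span ℝ
        {z : ExteriorAlgebra ℝ (Module.Dual ℝ V) |
          ∃ g : Fin (p - s) → Fin (Module.finrank ℝ V),
            (∀ j, s ≤ ((g j : ℕ))) ∧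
            z = (List.ofFn fun j => ExteriorAlgebra.ι ℝ (b (g j))).prod} ∧
      μ = (List.ofFn fun i : Fin (Module.finrank ℝ V) =>
            if (i : ℕ) < s then ExteriorAlgebra.ι ℝ (b i) else 1).prod * ζ ∧
      (∀ ξ : Module.Dual ℝ V, ξ ≠ 0 → ExteriorAlgebra.ι ℝ ξ * ζ ≠ 0) := by
  classical
  letI : Fintype {g : Fin p → Fin (Module.finrank ℝ V) // StrictMono g} := Fintype.ofFinite _
  -- basis expansion of μ
  have hμspan := Stmt3Aux.mem_span_strictMono b p hμdeg
  rw [Submodule.mem_span_range_iff_exists_fun] at hμspan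
  obtain ⟨c, hc⟩ := hμspan
  have hEμ : ∀ i : Fin (Module.finrank ℝ V), (i : ℕ) < s → ExteriorAlgebra.ι ℝ (b i) * μ = 0 := by
    intro i hi
    have h := hb i hi
    simpa only [divForms, LinearMap.mem_ker, LinearMap.comp_apply,
      LinearMap.mulRight_apply] using h
  -- every monomial with nonzero coefficient contains all indices < s
  have claim1 : ∀ g : {g : Fin p → Fin (Module.finrank ℝ V) // StrictMono g}, c g ≠ 0 →
      ∀ i : Fin (Module.finrank ℝ V), (i : ℕ) < s → i ∈ Set.range g.1 := by
    intro g₀ hg₀ i hi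
    by_contra hmem
    have h0 : ExteriorAlgebra.ι ℝ (b i) * μ = 0 := hEμ i hi
    rw [← hc, Finset.mul_sum] at h0
    have hterm : ∀ g : {g : Fin p → Fin (Module.finrank ℝ V) // StrictMono g},
        ExteriorAlgebra.ι ℝ (b i) * (c g • ExteriorAlgebra.ιMulti ℝ p (⇑b ∘ g.1)) =
        c g • ExteriorAlgebra.ιMulti ℝ (p+1) (⇑b ∘ Matrix.vecCons i g.1) := by
      intro g
      rw [mul_smul_comm, Stmt3Aux.ι_mul_ιMulti, Stmt3Aux.comp_vecCons']
    simp_rw [hterm] at h0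
    have hwinj : Function.Injective (Matrix.vecCons i g₀.1) :=
      Stmt3Aux.vecCons_injective hmem g₀.2.injective
    have hΦ := congrArg (Stmt3Aux.Phi b (p+1) (Matrix.vecCons i g₀.1)) h0
    rw [map_sum, map_zero] at hΦ
    rw [Finset.sum_eq_single g₀] at hΦ
    · rw [map_smul, Stmt3Aux.Phi_monomial_self b _ _ hwinj, smul_eq_mul, mul_one] at hΦ
      exact hg₀ hΦ
    · intro g _ hne
      have hneq : Matrix.vecCons i g.1 ≠ Matrix.vecCons i g₀.1 := by
        intro he
        apply hne
        have h' := congrArg Matrix.vecTail he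
        rw [Matrix.tail_cons, Matrix.tail_cons] at h'
        exact Subtype.ext h'
      have himp : Function.Injective (Matrix.vecCons i g.1) →
          Set.range (Matrix.vecCons i g.1) = Set.range (Matrix.vecCons i g₀.1) →
          Matrix.vecCons i g.1 = Matrix.vecCons i g₀.1 := by
        intro hinju hrange
        have hig : i ∉ Set.range g.1 := Stmt3Aux.vecCons_inj_head hinju
        rw [Matrix.range_cons, Matrix.range_cons] at hrange
        have h1 : Set.range g.1 = Set.range g₀.1 :=
          Stmt3Aux.union_singleton_cancel hig hmem hrange
        have h2 : g.1 = g₀.1 := Stmt3Aux.strictMono_eq_of_range_eq g.2 g₀.2 h1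
        rw [h2]
      rw [map_smul, Stmt3Aux.Phi_monomial_of_ne b (p+1) _ _ hwinj himp hneq, smul_zero]
    · intro h; exact absurd (Finset.mem_univ g₀) h
  obtain ⟨g₁, hg₁⟩ : ∃ g, c g ≠ 0 := by
    by_contra hall
    push_neg at hall
    apply hμ0
    rw [← hc]
    simp [hall]
  have hsn : s ≤ Module.finrank ℝ V := by
    have h1 : Module.finrank ℝ (divForms V μ) ≤ Module.finrank ℝ (Module.Dual ℝ V) :=
      Submodule.finrank_le _
    have h2 : Module.finrank ℝ (Module.Dual ℝ V) = Module.finrank ℝ V :=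
      Subspace.dual_finrank_eq
    omega
  have hsp : s ≤ p := by
    have hch : ∀ i : Fin s, ∃ m : Fin p, g₁.1 m = Fin.castLE hsn i := by
      intro i
      obtain ⟨m, hm⟩ := claim1 g₁ hg₁ (Fin.castLE hsn i) (by simpa using i.isLt)
      exact ⟨m, hm⟩
    choose F hF using hch
    have hinj : Function.Injective F := by
      intro i j hij
      have : Fin.castLE hsn i = Fin.castLE hsn j := by rw [← hF i, ← hF j, hij]
      exact Fin.castLE_injective hsn this
    simpa using Fintype.card_le_of_injective F hinj
  obtain ⟨q, rfl⟩ : ∃ q, p = s + q := ⟨p - s, (Nat.add_sub_cancel' hsp).symm⟩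
  rw [show s + q - s = q by omega]
  have fixg : ∀ g : {g : Fin (s+q) → Fin (Module.finrank ℝ V) // StrictMono g}, c g ≠ 0 →
      ∀ j : Fin (s+q), (j : ℕ) < s → ((g.1 j) : ℕ) = (j : ℕ) :=
    fun g hg => Stmt3Aux.strictMono_fix g.2 (claim1 g hg)
  set Ms : ExteriorAlgebra ℝ (Module.Dual ℝ V) :=
    (List.ofFn fun i : Fin s => ExteriorAlgebra.ι ℝ (b (Fin.castLE hsn i))).prod with hMs
  set t : {g : Fin (s+q) → Fin (Module.finrank ℝ V) // StrictMono g} → Fin q → Fin (Module.finrank ℝ V) :=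
    fun g j => g.1 (Fin.natAdd s j) with ht
  set ζ := ∑ g : {g : Fin (s+q) → Fin (Module.finrank ℝ V) // StrictMono g},
    c g • ExteriorAlgebra.ιMulti ℝ q (⇑b ∘ t g) with hζ
  have htmono : ∀ g : {g : Fin (s+q) → Fin (Module.finrank ℝ V) // StrictMono g}, StrictMono (t g) :=
    fun g => g.2.comp (Fin.strictMono_natAdd s)
  have hts : ∀ (g : {g : Fin (s+q) → Fin (Module.finrank ℝ V) // StrictMono g}) (j : Fin q),
      s ≤ ((t g j : Fin (Module.finrank ℝ V)) : ℕ) := by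
    intro g j
    have h1 := Stmt3Aux.strictMono_le_apply g.2 (Fin.natAdd s j)
    simp only [Fin.coe_natAdd] at h1
    have : ((t g j : Fin (Module.finrank ℝ V)) : ℕ) = ((g.1 (Fin.natAdd s j)) : ℕ) := rfl
    omega
  have hsplit : ∀ g : {g : Fin (s+q) → Fin (Module.finrank ℝ V) // StrictMono g}, c g ≠ 0 →
      ExteriorAlgebra.ιMulti ℝ (s+q) (⇑b ∘ g.1) =
        Ms * ExteriorAlgebra.ιMulti ℝ q (⇑b ∘ t g) := by
    intro g hg
    rw [ExteriorAlgebra.ιMulti_apply, ExteriorAlgebra.ιMulti_apply, hMs, List.ofFn_add,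
      List.prod_append]
    congr 1
    have hfun : (fun i : Fin s => ExteriorAlgebra.ι ℝ ((⇑b ∘ g.1) (Fin.castAdd q i))) =
        fun i : Fin s => ExteriorAlgebra.ι ℝ (b (Fin.castLE hsn i)) := by
      funext i
      have hiv : ((Fin.castAdd q i : Fin (s+q)) : ℕ) = (i : ℕ) := rfl
      have hfix := fixg g hg (Fin.castAdd q i) (by omega)
      have : g.1 (Fin.castAdd q i) = Fin.castLE hsn i := by
        apply Fin.ext
        rw [hfix, hiv]
        rfl
      simp only [Function.comp_apply, this]
    erw [hfun]
  have hμζ : μ = Ms * ζ := by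
    rw [hζ, Finset.mul_sum, ← hc]
    refine Finset.sum_congr rfl fun g _ => ?_
    by_cases hg : c g = 0
    · rw [hg]; simp
    · rw [hsplit g hg, mul_smul_comm]
  have hgeq : ∀ g g' : {g : Fin (s+q) → Fin (Module.finrank ℝ V) // StrictMono g}, c g ≠ 0 → c g' ≠ 0 →
      t g = t g' → g = g' := by
    intro g g' hg hg' htg
    apply Subtype.ext
    funext j
    by_cases hj : (j : ℕ) < s
    · apply Fin.ext
      rw [fixg g hg j hj, fixg g' hg' j hj]
    · have hj' : (j : ℕ) - s < q := by have := j.isLt; omega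
      have hnat : Fin.natAdd s ⟨(j : ℕ) - s, hj'⟩ = j := by
        apply Fin.ext
        simp only [Fin.coe_natAdd]
        omega
      rw [← hnat]
      exact congrFun htg ⟨(j : ℕ) - s, hj'⟩
  have hhead : ∀ (i : Fin s) (g : {g : Fin (s+q) → Fin (Module.finrank ℝ V) // StrictMono g}),
      (Fin.castLE hsn i : Fin (Module.finrank ℝ V)) ∉ Set.range (t g) := by
    rintro i g ⟨m, hm⟩
    have h1 := hts g m
    have h2 := congrArg Fin.val hm
    simp only [Fin.coe_castLE] at h2
    have := i.isLt
    omega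
  refine ⟨ζ, ?_, ?_, ?_, ?_⟩
  · rw [hζ]
    refine Submodule.sum_mem _ fun g _ => Submodule.smul_mem _ _ ?_
    exact ExteriorAlgebra.ιMulti_range ℝ q ⟨⇑b ∘ t g, rfl⟩
  · rw [hζ]
    refine Submodule.sum_mem _ fun g _ => Submodule.smul_mem _ _ ?_
    exact Submodule.subset_span ⟨t g, fun j => hts g j, rfl⟩
  · rw [Stmt3Aux.listIf' hsn (fun i => ExteriorAlgebra.ι ℝ (b i))]
    exact hμζ
  · intro ξ hξ0 hcontra
    have h1 : ExteriorAlgebra.ι ℝ ξ * μ = 0 := by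
      rw [hμζ, ← mul_assoc, hMs,
        Stmt3Aux.ι_mul_prod ξ s (fun i => b (Fin.castLE hsn i)),
        smul_mul_assoc, mul_assoc, hcontra, mul_zero, smul_zero]
    have h2 : ξ ∈ divForms V μ := by
      simp only [divForms, LinearMap.mem_ker, LinearMap.comp_apply, LinearMap.mulRight_apply]
      exact h1
    have hli : LinearIndependent ℝ (fun i : Fin s => b (Fin.castLE hsn i)) :=
      b.linearIndependent.comp _ (Fin.castLE_injective hsn)
    have h3 : Submodule.span ℝ (Set.range fun i : Fin s => b (Fin.castLE hsn i)) =
        divForms V μ := by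
      apply Submodule.eq_of_le_of_finrank_le
      · rw [Submodule.span_le]
        rintro _ ⟨i, rfl⟩
        exact hb (Fin.castLE hsn i) (by simpa using i.isLt)
      · rw [finrank_span_eq_card hli, Fintype.card_fin, ← hs]
    rw [← h3, Submodule.mem_span_range_iff_exists_fun] at h2
    obtain ⟨r, hr⟩ := h2
    obtain ⟨i₀, hi₀⟩ : ∃ i, r i ≠ 0 := by
      by_contra hall
      push_neg at hall
      apply hξ0
      rw [← hr]
      simp [hall]
    have hexp : ExteriorAlgebra.ι ℝ ξ * ζ =
        ∑ i : Fin s, ∑ g : {g : Fin (s+q) → Fin (Module.finrank ℝ V) // StrictMono g},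
          (r i * c g) • ExteriorAlgebra.ιMulti ℝ (q+1)
            (⇑b ∘ Matrix.vecCons (Fin.castLE hsn i) (t g)) := by
      conv_lhs => rw [← hr, hζ]
      rw [map_sum, Finset.sum_mul]
      refine Finset.sum_congr rfl fun i _ => ?_
      rw [map_smul, smul_mul_assoc, Finset.mul_sum, Finset.smul_sum]
      refine Finset.sum_congr rfl fun g _ => ?_
      rw [mul_smul_comm, smul_smul]
      congr 1
      rw [Stmt3Aux.ι_mul_ιMulti, Stmt3Aux.comp_vecCons']
    have h0 : (∑ i : Fin s, ∑ g : {g : Fin (s+q) → Fin (Module.finrank ℝ V) // StrictMono g},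
        (r i * c g) • ExteriorAlgebra.ιMulti ℝ (q+1)
          (⇑b ∘ Matrix.vecCons (Fin.castLE hsn i) (t g))) = 0 := by
      rw [← hexp, hcontra]
    set w : Fin (q+1) → Fin (Module.finrank ℝ V) := Matrix.vecCons (Fin.castLE hsn i₀) (t g₁) with hww
    have hwinj : Function.Injective w :=
      Stmt3Aux.vecCons_injective (hhead i₀ g₁) (htmono g₁).injective
    have hΦ := congrArg (Stmt3Aux.Phi b (q+1) w) h0
    rw [map_sum, map_zero] at hΦ
    rw [Finset.sum_eq_single i₀] at hΦ
    · rw [map_sum, Finset.sum_eq_single g₁] at hΦ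
      · rw [map_smul, hww, Stmt3Aux.Phi_monomial_self b _ _ hwinj, smul_eq_mul, mul_one] at hΦ
        exact (mul_ne_zero hi₀ hg₁) hΦ
      · intro g _ hgne
        by_cases hcg : c g = 0
        · rw [hcg, mul_zero, zero_smul, map_zero]
        · have hneq : Matrix.vecCons (Fin.castLE hsn i₀) (t g) ≠ w := by
            intro he
            apply hgne
            rw [hww] at he
            have h' := congrArg Matrix.vecTail he
            rw [Matrix.tail_cons, Matrix.tail_cons] at h'
            exact hgeq g g₁ hcg hg₁ h'
          have himp : Function.Injective (Matrix.vecCons (Fin.castLE hsn i₀) (t g)) →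
              Set.range (Matrix.vecCons (Fin.castLE hsn i₀) (t g)) = Set.range w →
              Matrix.vecCons (Fin.castLE hsn i₀) (t g) = w := by
            intro hinju hrange
            rw [hww, Matrix.range_cons, Matrix.range_cons] at hrange
            have hr1 : Set.range (t g) = Set.range (t g₁) :=
              Stmt3Aux.union_singleton_cancel (hhead i₀ g) (hhead i₀ g₁) hrange
            have hr2 : t g = t g₁ := Stmt3Aux.strictMono_eq_of_range_eq (htmono g) (htmono g₁) hr1
            rw [hww, hr2]
          rw [map_smul, Stmt3Aux.Phi_monomial_of_ne b (q+1) w _ hwinj himp hneq, smul_zero]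
      · intro h; exact absurd (Finset.mem_univ g₁) h
    · intro i _ hine
      rw [map_sum]
      refine Finset.sum_eq_zero fun g _ => ?_
      have hneq : Matrix.vecCons (Fin.castLE hsn i) (t g) ≠ w := by
        intro he
        rw [hww] at he
        have h' := congrArg (fun f => f 0) he
        simp only [Matrix.cons_val_zero] at h'
        exact hine (Fin.castLE_injective hsn h')
      have himp : Function.Injective (Matrix.vecCons (Fin.castLE hsn i) (t g)) →
          Set.range (Matrix.vecCons (Fin.castLE hsn i) (t g)) = Set.range w →
          Matrix.vecCons (Fin.castLE hsn i) (t g) = w := by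
        intro hinju hrange
        exfalso
        have hmem : (Fin.castLE hsn i : Fin (Module.finrank ℝ V)) ∈ Set.range w := by
          rw [← hrange]
          exact ⟨0, rfl⟩
        rw [hww, Matrix.range_cons] at hmem
        rcases hmem with hm | hm
        · exact hine (Fin.castLE_injective hsn (Set.mem_singleton_iff.1 hm))
        · exact hhead i g₁ hm
      rw [map_smul, Stmt3Aux.Phi_monomial_of_ne b (q+1) w _ hwinj himp hneq, smul_zero]
    · intro h; exact absurd (Finset.mem_univ i₀) h
end

section
/- Let μ be a nonzero exterior p-form (1 ≤ p ≤ n) on an n-dimensional real vector space V, let D be its divisibility space, let D′ = {ξ ∈ V* : ξ ∧ μ = 0}, and let s = dim D′. Suppose μ = ξ¹ ∧ … ∧ ξˢ ∧ ζ and μ = η¹ ∧ … ∧ ηˢ ∧ ζ′, where (ξ¹, …, ξˢ) and (η¹, …, ηˢ) are bases of D′ and ζ, ζ′ are exterior (p−s)-forms on V. Then the restrictions of ζ and ζ′ to the subspace D (as alternating (p−s)-linear forms on D) satisfy ζ|_D = c · ζ′|_D for some nonzero real number c. -/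
set_option synthInstance.maxHeartbeats 1000000
set_option maxHeartbeats 1000000

/-- Restriction of an exterior form on `V` to the subspace `D ⊆ V`: the image under the
algebra map induced by the dual of the inclusion `D → V`. -/
noncomputable def restrictForm (V : Type*) [AddCommGroup V] [Module ℝ V]
    (D : Submodule ℝ V) (ζ : ExteriorAlgebra ℝ (Module.Dual ℝ V)) :
    ExteriorAlgebra ℝ (Module.Dual ℝ D) :=
  ExteriorAlgebra.map (D.subtype.dualMap) ζ

section AuxLemmas

open ExteriorAlgebra CliffordAlgebra

variable {R M N : Type*} [CommRing R] [AddCommGroup M] [Module R M]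
  [AddCommGroup N] [Module R N]

/-- A 1-form anticommutes past a product of `s` 1-forms, up to `(-1)^s`. -/
lemma aux_ι_mul_prod (s : ℕ) (ξ : Fin s → M) (x : M) :
    ι R x * (List.ofFn fun i => ι R (ξ i)).prod
      = ((-1 : ℤ) ^ s) • ((List.ofFn fun i => ι R (ξ i)).prod * ι R x) := by
  induction s with
  | zero => simp
  | succ s ih =>
    rw [List.ofFn_succ, List.prod_cons]
    have swap : ι R x * ι R (ξ 0) = - (ι R (ξ 0) * ι R x) := by
      have := ι_add_mul_swap (R := R) x (ξ 0)
      linear_combination (norm := noncomm_ring) this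
    calc ι R x * (ι R (ξ 0) * (List.ofFn fun i => ι R (ξ i.succ)).prod)
        = (ι R x * ι R (ξ 0)) * (List.ofFn fun i => ι R (ξ i.succ)).prod := by rw [mul_assoc]
      _ = - (ι R (ξ 0) * (ι R x * (List.ofFn fun i => ι R (ξ i.succ)).prod)) := by
          rw [swap]; noncomm_ring
      _ = - (ι R (ξ 0) * (((-1 : ℤ) ^ s) • ((List.ofFn fun i => ι R (ξ i.succ)).prod * ι R x))) := by
          rw [ih (fun i => ξ i.succ)]
      _ = ((-1 : ℤ) ^ (s+1)) • (ι R (ξ 0) * (List.ofFn fun i => ι R (ξ i.succ)).prod * ι R x) := by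
          rw [mul_smul_comm, pow_succ, ← neg_smul, mul_assoc]; ring_nf

/-- Contraction by `d` slides past a product of 1-forms each killed by `d`. -/
lemma aux_contract_prod (s : ℕ) (ξ : Fin s → M) (d : Module.Dual R M)
    (h : ∀ i, d (ξ i) = 0) (ω : ExteriorAlgebra R M) :
    contractLeft (Q := (0 : QuadraticForm R M)) d ((List.ofFn fun i => ι R (ξ i)).prod * ω)
      = ((-1 : ℤ) ^ s) • ((List.ofFn fun i => ι R (ξ i)).prod
          * contractLeft (Q := (0 : QuadraticForm R M)) d ω) := by
  induction s with
  | zero => simp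
  | succ s ih =>
    rw [List.ofFn_succ, List.prod_cons, mul_assoc,
      CliffordAlgebra.contractLeft_ι_mul, h 0, zero_smul, zero_sub,
      ih (fun i => ξ i.succ) (fun i => h i.succ), mul_smul_comm, ← neg_smul, pow_succ,
      mul_assoc]
    ring_nf

/-- Key division lemma: if `ξ¹ ∧ ⋯ ∧ ξˢ ∧ ω = 0` for a family admitting a dual family `d`,
then any algebra homomorphism killing each `ι (ξ i)` kills `ω`. -/
lemma aux_key {A : Type*} [Ring A] [Algebra R A] :
    ∀ (s : ℕ) (ξ : Fin s → M) (d : Fin s → Module.Dual R M),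
    (∀ i j, d i (ξ j) = if i = j then 1 else 0) →
    ∀ (f : ExteriorAlgebra R M →ₐ[R] A), (∀ i, f (ι R (ξ i)) = 0) →
    ∀ ω : ExteriorAlgebra R M,
    (List.ofFn fun i => ι R (ξ i)).prod * ω = 0 → f ω = 0 := by
  intro s
  induction s with
  | zero =>
    intro ξ d hd f hf ω h
    simp only [List.ofFn_zero, List.prod_nil, one_mul] at h
    rw [h, map_zero]
  | succ s ih =>
    intro ξ d hd f hf ω h
    set Q : ExteriorAlgebra R M := (List.ofFn fun i => ι R (ξ i.succ)).prod with hQ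
    rw [List.ofFn_succ, List.prod_cons, mul_assoc] at h
    have h1 : (0 : ExteriorAlgebra R M)
        = (d 0) (ξ 0) • (Q * ω) - ι R (ξ 0) *
          contractLeft (Q := (0 : QuadraticForm R M)) (d 0) (Q * ω) := by
      rw [← CliffordAlgebra.contractLeft_ι_mul, h, map_zero]
    rw [hd 0 0, if_pos rfl, one_smul,
      aux_contract_prod s (fun i => ξ i.succ) (d 0)
        (fun i => by rw [hd 0 i.succ, if_neg (Fin.succ_ne_zero i).symm]) ω] at h1
    set ω0 := contractLeft (Q := (0 : QuadraticForm R M)) (d 0) ω with hω0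
    have h2 : Q * ω = ι R (ξ 0) * (((-1 : ℤ) ^ s) • (Q * ω0)) :=
      sub_eq_zero.mp h1.symm
    have h2' : Q * ω = Q * (ι R (ξ 0) * ω0) := by
      calc Q * ω = ι R (ξ 0) * (((-1 : ℤ) ^ s) • (Q * ω0)) := h2
        _ = ((-1 : ℤ) ^ s) • (ι R (ξ 0) * Q * ω0) := by rw [mul_smul_comm, mul_assoc]
        _ = ((-1 : ℤ) ^ s) • ((((-1 : ℤ) ^ s) • (Q * ι R (ξ 0))) * ω0) := by
            rw [aux_ι_mul_prod s (fun i => ξ i.succ) (ξ 0)]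
        _ = (((-1 : ℤ) ^ s * (-1 : ℤ) ^ s)) • (Q * (ι R (ξ 0) * ω0)) := by
            rw [smul_mul_assoc, smul_smul, mul_assoc]
        _ = Q * (ι R (ξ 0) * ω0) := by
            rw [← pow_add, Even.neg_one_pow ⟨s, rfl⟩, one_smul]
    have h3 : Q * (ω - ι R (ξ 0) * ω0) = 0 := by rw [mul_sub, h2', sub_self]
    have h4 := ih (fun i => ξ i.succ) (fun i => d i.succ)
      (fun i j => by rw [hd i.succ j.succ]; simp [Fin.succ_inj]) f
      (fun i => hf i.succ) _ h3
    rw [map_sub, map_mul, hf 0, zero_mul, sub_zero] at h4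
    exact h4

/-- A linearly independent family over a field admits a dual family of functionals. -/
lemma aux_exists_dual {K W : Type*} [Field K] [AddCommGroup W] [Module K W]
    {s : ℕ} {ξ : Fin s → W} (hli : LinearIndependent K ξ) :
    ∃ d : Fin s → Module.Dual K W, ∀ i j, d i (ξ j) = if i = j then 1 else 0 := by
  obtain ⟨q, hq⟩ := (Submodule.span K (Set.range ξ)).exists_isCompl
  let π := Submodule.linearProjOfIsCompl _ q hq
  let b := Module.Basis.span hli
  refine ⟨fun i => (b.coord i).comp π, fun i j => ?_⟩
  have hmem : ξ j ∈ Submodule.span K (Set.range ξ) :=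
    Submodule.subset_span (Set.mem_range_self j)
  have hπ : π (ξ j) = b j := by
    refine (Submodule.linearProjOfIsCompl_apply_left hq ⟨ξ j, hmem⟩).trans ?_
    exact (Module.Basis.span_apply hli j).symm
  -- adjust: π takes values in the span; π applied to ξ j directly
  have : (b.coord i).comp π (ξ j) = b.coord i (b j) := by
    rw [LinearMap.comp_apply, hπ]
  rw [this, Module.Basis.coord_apply, Module.Basis.repr_self_apply]
  simp [eq_comm]

/-- A vector-valued alternating map evaluated on any family equals the determinant in a basis
times its value on the basis. -/
lemma aux_det_smul {K W N : Type*} [Field K] [AddCommGroup W] [Module K W]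
    [AddCommGroup N] [Module K N] {s : ℕ} (e : Module.Basis (Fin s) K W)
    (g : W [⋀^Fin s]→ₗ[K] N) (v : Fin s → W) :
    g v = e.det v • g e := by
  have key : g = (LinearMap.toSpanSingleton K N (g e)).compAlternatingMap e.det := by
    refine Module.Basis.ext_alternating e fun i hi => ?_
    let σ : Equiv.Perm (Fin s) := Equiv.ofBijective i (Finite.injective_iff_bijective.1 hi)
    have hσ : ∀ j, e (i j) = (e ∘ σ) j := fun j => rfl
    simp only [hσ]
    rw [show (fun j => (e ∘ σ) j) = e ∘ σ from rfl]
    rw [AlternatingMap.map_perm, LinearMap.compAlternatingMap_apply,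
      AlternatingMap.map_perm, Module.Basis.det_self, LinearMap.toSpanSingleton_apply]
    simp [Units.smul_def, Int.cast_smul_eq_zsmul]
  rw [key]
  simp [LinearMap.toSpanSingleton_apply, Module.Basis.det_self]

end AuxLemmas

set_option maxHeartbeats 10000000 in
/-- With `μ` a nonzero exterior `p`-form, `D` its divisibility space,
`D′ = {ξ : ξ ∧ μ = 0}`, `s = dim D′`: if `μ = ξ¹ ∧ ⋯ ∧ ξˢ ∧ ζ = η¹ ∧ ⋯ ∧ ηˢ ∧ ζ′` for
bases `(ξⁱ)`, `(ηⁱ)` of `D′` and `(p-s)`-forms `ζ, ζ′`, then the restrictions of `ζ` and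
`ζ′` to `D` agree up to a nonzero constant factor. -/
theorem stmt4 (V : Type*) [AddCommGroup V] [Module ℝ V] [FiniteDimensional ℝ V]
    (p : ℕ) (hp1 : 1 ≤ p) (hpn : p ≤ Module.finrank ℝ V)
    (μ : ExteriorAlgebra ℝ (Module.Dual ℝ V))
    (hμdeg : μ ∈ ⋀[ℝ]^p (Module.Dual ℝ V)) (hμ0 : μ ≠ 0)
    (s : ℕ) (hs : s = Module.finrank ℝ (divForms V μ))
    (ξ η : Fin s → Module.Dual ℝ V)
    (hξli : LinearIndependent ℝ ξ)
    (hξsp : Submodule.span ℝ (Set.range ξ) = divForms V μ)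
    (hηli : LinearIndependent ℝ η)
    (hηsp : Submodule.span ℝ (Set.range η) = divForms V μ)
    (ζ ζ' : ExteriorAlgebra ℝ (Module.Dual ℝ V))
    (hζdeg : ζ ∈ ⋀[ℝ]^(p - s) (Module.Dual ℝ V))
    (hζ'deg : ζ' ∈ ⋀[ℝ]^(p - s) (Module.Dual ℝ V))
    (hμζ : μ = (List.ofFn fun i => ExteriorAlgebra.ι ℝ (ξ i)).prod * ζ)
    (hμζ' : μ = (List.ofFn fun i => ExteriorAlgebra.ι ℝ (η i)).prod * ζ') :
    ∃ c : ℝ, c ≠ 0 ∧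
      restrictForm V (divSpace V μ) ζ = c • restrictForm V (divSpace V μ) ζ' := by
  classical
  -- the restriction algebra homomorphism
  set D : Submodule ℝ V := divSpace V μ with hD
  let f : ExteriorAlgebra ℝ (Module.Dual ℝ V) →ₐ[ℝ]
      ExteriorAlgebra ℝ (Module.Dual ℝ D) := ExteriorAlgebra.map (D.subtype.dualMap)
  have hrf : ∀ χ, restrictForm V (divSpace V μ) χ = f χ := fun _ => rfl
  have hmemξ : ∀ i, ξ i ∈ divForms V μ := fun i =>
    hξsp ▸ Submodule.subset_span (Set.mem_range_self i)
  have hmemη : ∀ i, η i ∈ divForms V μ := fun i =>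
    hηsp ▸ Submodule.subset_span (Set.mem_range_self i)
  have hkill : ∀ θ : Module.Dual ℝ V, θ ∈ divForms V μ →
      f (ExteriorAlgebra.ι ℝ θ) = 0 := by
    intro θ hθ
    have h0 : D.subtype.dualMap θ = 0 := by
      ext x
      simp only [LinearMap.dualMap_apply, LinearMap.zero_apply, Submodule.coe_subtype]
      have hx : (x : V) ∈ (divForms V μ).dualCoannihilator := x.2
      exact (Submodule.mem_dualCoannihilator (x : V)).mp hx θ hθ
    rw [show f (ExteriorAlgebra.ι ℝ θ) = ExteriorAlgebra.ι ℝ (D.subtype.dualMap θ) from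
      ExteriorAlgebra.map_apply_ι _ _, h0, map_zero]
  -- the determinant comparison
  set S : Submodule ℝ (Module.Dual ℝ V) := Submodule.span ℝ (Set.range ξ) with hS
  let b : Module.Basis (Fin s) ℝ S := Module.Basis.span hξli
  have hηS : ∀ i, η i ∈ S := fun i => by rw [hξsp]; exact hmemη i
  let η' : Fin s → S := fun i => ⟨η i, hηS i⟩
  let g : S [⋀^Fin s]→ₗ[ℝ] ExteriorAlgebra ℝ (Module.Dual ℝ V) :=
    (ExteriorAlgebra.ιMulti ℝ s).compLinearMap S.subtype
  set c : ℝ := b.det η' with hc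
  have hdet : g η' = c • g b := aux_det_smul b g η'
  have hgη : g η' = (List.ofFn fun i => ExteriorAlgebra.ι ℝ (η i)).prod := by
    rw [show g η' = ExteriorAlgebra.ιMulti ℝ s (fun i => (η' i : Module.Dual ℝ V)) from
      AlternatingMap.compLinearMap_apply _ _ _]
    exact ExteriorAlgebra.ιMulti_apply _
  have hgb : g b = (List.ofFn fun i => ExteriorAlgebra.ι ℝ (ξ i)).prod := by
    rw [show g b = ExteriorAlgebra.ιMulti ℝ s (fun i => (b i : Module.Dual ℝ V)) from
      AlternatingMap.compLinearMap_apply _ _ _]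
    rw [show (fun i => (b i : Module.Dual ℝ V)) = ξ from
      funext fun i => congrArg Subtype.val (Module.Basis.span_apply hξli i)]
    exact ExteriorAlgebra.ιMulti_apply _
  -- c is nonzero, else μ = 0
  have hc0 : c ≠ 0 := by
    intro h0
    apply hμ0
    rw [hμζ', ← hgη, hdet, h0, zero_smul, zero_mul]
  -- the product relation
  have hzero : (List.ofFn fun i => ExteriorAlgebra.ι ℝ (ξ i)).prod * (ζ - c • ζ') = 0 := by
    rw [mul_sub, ← hμζ, mul_smul_comm, ← smul_mul_assoc, ← hgb, ← hdet, hgη, ← hμζ', sub_self]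
  obtain ⟨d, hd⟩ := aux_exists_dual hξli
  have hfin := aux_key s ξ d hd f (fun i => hkill (ξ i) (hmemξ i)) _ hzero
  rw [map_sub, map_smul, sub_eq_zero] at hfin
  exact ⟨c, hc0, by rw [hrf, hrf, hfin]⟩
end

section
/- Let μ be a nonzero exterior p-form (1 ≤ p ≤ n) on an n-dimensional real vector space V, let D be its divisibility space, let D′ = {ξ ∈ V* : ξ ∧ μ = 0}, and let s = dim D′. If μ = ξ¹ ∧ … ∧ ξˢ ∧ ζ for some basis (ξ¹, …, ξˢ) of D′ and some exterior (p−s)-form ζ on V, then the restriction of ζ to D is indivisible as an exterior (p−s)-form on the vector space D: for every nonzero linear functional η on D, η ∧ (ζ|_D) ≠ 0. -/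
set_option synthInstance.maxHeartbeats 1000000
set_option maxHeartbeats 1000000

open ExteriorAlgebra

lemma mul_iota_eq {M : Type*} [AddCommGroup M] [Module ℝ M]
    (w : M) (x : ExteriorAlgebra ℝ M) :
    x * ι ℝ w = ι ℝ w * CliffordAlgebra.involute x := by
  induction x using ExteriorAlgebra.induction with
  | algebraMap r => rw [CliffordAlgebra.involute.commutes, Algebra.commutes]
  | ι m =>
    rw [CliffordAlgebra.involute_ι]
    have h := ExteriorAlgebra.ι_add_mul_swap (R := ℝ) m w
    rw [mul_neg, eq_neg_iff_add_eq_zero]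
    exact h
  | mul a b ha hb => rw [map_mul, mul_assoc, hb, ← mul_assoc, ha, mul_assoc]
  | add a b ha hb => rw [map_add, add_mul, ha, hb, mul_add]

lemma neg_ofFn_prod {A : Type*} [Ring A] [Algebra ℝ A] :
    ∀ (n : ℕ) (f : Fin n → A),
      (List.ofFn fun i => - f i).prod = ((-1 : ℝ)^n) • (List.ofFn f).prod := by
  intro n
  induction n with
  | zero => simp
  | succ n ih =>
    intro f
    rw [List.ofFn_succ, List.ofFn_succ, List.prod_cons, List.prod_cons, ih (fun i => f i.succ)]
    rw [pow_succ]
    simp [mul_smul, Algebra.mul_smul_comm, Algebra.smul_mul_assoc]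

/-- With `μ` a nonzero exterior `p`-form, `D` its divisibility space,
`D′ = {ξ : ξ ∧ μ = 0}`, `s = dim D′`: if `μ = ξ¹ ∧ ⋯ ∧ ξˢ ∧ ζ` for a basis `(ξⁱ)` of `D′`
and a `(p-s)`-form `ζ`, then the restriction of `ζ` to `D` is indivisible: its wedge with
every nonzero linear functional on `D` is nonzero. -/
theorem stmt5 (V : Type*) [AddCommGroup V] [Module ℝ V] [FiniteDimensional ℝ V]
    (p : ℕ) (hp1 : 1 ≤ p) (hpn : p ≤ Module.finrank ℝ V)
    (μ : ExteriorAlgebra ℝ (Module.Dual ℝ V))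
    (hμdeg : μ ∈ ⋀[ℝ]^p (Module.Dual ℝ V)) (hμ0 : μ ≠ 0)
    (s : ℕ) (hs : s = Module.finrank ℝ (divForms V μ))
    (ξ : Fin s → Module.Dual ℝ V)
    (hξli : LinearIndependent ℝ ξ)
    (hξsp : Submodule.span ℝ (Set.range ξ) = divForms V μ)
    (ζ : ExteriorAlgebra ℝ (Module.Dual ℝ V))
    (hζdeg : ζ ∈ ⋀[ℝ]^(p - s) (Module.Dual ℝ V))
    (hμζ : μ = (List.ofFn fun i => ExteriorAlgebra.ι ℝ (ξ i)).prod * ζ) :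
    ∀ η : Module.Dual ℝ (divSpace V μ), η ≠ 0 →
      ExteriorAlgebra.ι ℝ η * restrictForm V (divSpace V μ) ζ ≠ 0 := by
  classical
  intro η hη hcontra
  set Ξ : ExteriorAlgebra ℝ (Module.Dual ℝ V) :=
    (List.ofFn fun i => ExteriorAlgebra.ι ℝ (ξ i)).prod with hΞdef
  -- ι w * Ξ = 0 for w ∈ divForms
  have hwΞ : ∀ w ∈ divForms V μ, ι ℝ w * Ξ = 0 := by
    intro w hw
    rw [← hξsp] at hw
    induction hw using Submodule.span_induction with
    | mem x hx =>
      obtain ⟨i, rfl⟩ := hx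
      exact ExteriorAlgebra.ι_mul_prod_list ξ i
    | zero => simp
    | add x y _ _ hx hy => rw [map_add, add_mul, hx, hy, add_zero]
    | smul c x _ hx => rw [map_smul, smul_mul_assoc, hx, smul_zero]
  -- involute Ξ = (-1)^s • Ξ
  have hinv : CliffordAlgebra.involute Ξ = ((-1 : ℝ)^s) • Ξ := by
    rw [hΞdef, map_list_prod, List.map_ofFn]
    have h2 : (List.ofFn (CliffordAlgebra.involute ∘ fun i => ι ℝ (ξ i))) =
        (List.ofFn fun i => - ι ℝ (ξ i)) := by
      congr 1
      ext i
      exact CliffordAlgebra.involute_ι (ξ i)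
    rw [h2, neg_ofFn_prod]
  -- Ξ * ι w = 0 for w ∈ divForms
  have hΞw : ∀ w ∈ divForms V μ, Ξ * ι ℝ w = 0 := by
    intro w hw
    rw [mul_iota_eq, hinv, mul_smul_comm, hwΞ w hw, smul_zero]
  -- a projection onto divSpace and the induced section of the restriction map
  obtain ⟨C, hC⟩ := Submodule.exists_isCompl (divSpace V μ)
  set π : V →ₗ[ℝ] (divSpace V μ) := (divSpace V μ).projectionOnto C hC with hπ
  set r : Module.Dual ℝ V →ₗ[ℝ] Module.Dual ℝ (divSpace V μ) :=
    (divSpace V μ).subtype.dualMap with hr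
  set j : Module.Dual ℝ (divSpace V μ) →ₗ[ℝ] Module.Dual ℝ V := π.dualMap with hj
  have hrj : ∀ η' : Module.Dual ℝ (divSpace V μ), r (j η') = η' := by
    intro η'
    ext v
    simp only [hr, hj, LinearMap.dualMap_apply, LinearMap.comp_apply, Submodule.coe_subtype]
    rw [hπ, Submodule.projectionOnto_apply_left hC v]
  -- kernel of r is divForms
  have hker : ∀ φ : Module.Dual ℝ V, r φ = 0 → φ ∈ divForms V μ := by
    intro φ hφ
    have hφ' : φ ∈ (divSpace V μ).dualAnnihilator := by
      rw [Submodule.mem_dualAnnihilator]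
      intro w hw
      exact congrFun (congrArg DFunLike.coe hφ) ⟨w, hw⟩
    have hda : (divSpace V μ).dualAnnihilator = divForms V μ := by
      rw [divSpace]
      exact Subspace.dualCoannihilator_dualAnnihilator_eq
    rwa [hda] at hφ'
  set jr : Module.Dual ℝ V →ₗ[ℝ] Module.Dual ℝ V := j.comp r with hjr
  -- key lemma
  have hkey : ∀ (x z : ExteriorAlgebra ℝ (Module.Dual ℝ V)),
      Ξ * z * x = Ξ * z * ExteriorAlgebra.map jr x := by
    intro x
    induction x using ExteriorAlgebra.induction with
    | algebraMap c => intro z; rw [AlgHom.commutes]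
    | ι φ =>
      intro z
      rw [ExteriorAlgebra.map_apply_ι]
      have hmem : φ - jr φ ∈ divForms V μ := by
        apply hker
        simp only [hjr, LinearMap.comp_apply, map_sub, hrj]
        exact sub_self _
      have h0 : Ξ * z * (ι ℝ (φ - jr φ)) = 0 := by
        rw [mul_assoc, mul_iota_eq (φ - jr φ) z, ← mul_assoc, hΞw _ hmem, zero_mul]
      rw [map_sub, mul_sub] at h0
      exact sub_eq_zero.mp h0
    | mul a b ha hb =>
      intro z
      rw [map_mul]
      calc Ξ * z * (a * b) = Ξ * z * a * b := by rw [← mul_assoc]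
        _ = Ξ * z * ExteriorAlgebra.map jr a * b := by rw [ha z]
        _ = Ξ * (z * ExteriorAlgebra.map jr a) * b := by rw [mul_assoc Ξ]
        _ = Ξ * (z * ExteriorAlgebra.map jr a) * ExteriorAlgebra.map jr b := hb _
        _ = Ξ * z * (ExteriorAlgebra.map jr a * ExteriorAlgebra.map jr b) := by
            rw [← mul_assoc Ξ, mul_assoc (Ξ * z)]
    | add a b ha hb =>
      intro z
      rw [map_add, mul_add, mul_add, ha z, hb z]
  -- conclude
  set ηt : Module.Dual ℝ V := j η with hηt
  have hx0 : ExteriorAlgebra.map jr (ι ℝ ηt * ζ) = 0 := by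
    have hcomp : ExteriorAlgebra.map jr (ι ℝ ηt * ζ)
        = ExteriorAlgebra.map j (ExteriorAlgebra.map r (ι ℝ ηt * ζ)) := by
      rw [← AlgHom.comp_apply, ExteriorAlgebra.map_comp_map]
    rw [hcomp, map_mul, ExteriorAlgebra.map_apply_ι, hrj]
    have hres : ExteriorAlgebra.map r ζ = restrictForm V (divSpace V μ) ζ := rfl
    rw [hres, hcontra, map_zero]
  have hΞx : Ξ * (ι ℝ ηt * ζ) = 0 := by
    have hk := hkey (ι ℝ ηt * ζ) 1
    rw [hx0, mul_zero] at hk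
    rwa [mul_one] at hk
  have hiμ : ι ℝ ηt * μ = 0 := by
    rw [hμζ, ← mul_assoc]
    have h1 : ι ℝ ηt * Ξ = ((-1 : ℝ)^s) • (Ξ * ι ℝ ηt) := by
      rw [mul_iota_eq ηt Ξ, hinv, mul_smul_comm, smul_smul, ← mul_pow, neg_mul_neg, one_mul, one_pow, one_smul]
    rw [h1, smul_mul_assoc, mul_assoc, hΞx, smul_zero]
  have hmem : ηt ∈ divForms V μ := by
    rw [divForms, LinearMap.mem_ker, LinearMap.comp_apply, LinearMap.mulRight_apply]
    exact hiμ
  have hη0 : η = 0 := by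
    rw [← hrj η, ← hηt]
    ext v
    have h2 : (v : V) ∈ (divForms V μ).dualCoannihilator := v.2
    have hv := (Submodule.mem_dualCoannihilator _).mp h2 ηt hmem
    simpa [hr, LinearMap.dualMap_apply] using hv
  exact hη hη0
end
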